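/- arXiv:math/0306198 — 2 statements merged into one kernel-verified Lean document; each statement's English description precedes it below -/
import Mathlib

section
/- Fix r ≥ 1. Define for an r-tuple of Young diagrams Y⃗ = (Y_1,...,Y_r) and indices α, β the product n^{Y⃗}_{α,β}(ε_1,ε_2,a⃗) = ∏_{s∈Y_α} (−l_{Y_β}(s)ε_1 + (a_{Y_α}(s)+1)ε_2 + a_β − a_α) · ∏_{t∈Y_β} ((l_{Y_α}(t)+1)ε_1 − a_{Y_β}(t)ε_2 + a_β − a_α), and Z(ε_1,ε_2,a⃗;q) = ∑_{Y⃗} q^{|Y⃗|} / ∏_{α,β=1}^r n^{Y⃗}_{α,β}(ε_1,ε_2,a⃗). Then Z(ε_2, ε_1, a⃗; q) = Z(ε_1, ε_2, a⃗; q) as formal power series in q with coefficients in the rational function field Q(ε_1, ε_2, a_1, ..., a_r). -/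
noncomputable section

/-- Arm-length of `s = (i,j)` (0-indexed) in `Y`; may be negative outside `Y`. -/
def armLen (Y : YoungDiagram) (s : ℕ × ℕ) : ℤ := (Y.rowLen s.1 : ℤ) - s.2 - 1

/-- Leg-length of `s = (i,j)` (0-indexed) in `Y`; may be negative outside `Y`. -/
def legLen (Y : YoungDiagram) (s : ℕ × ℕ) : ℤ := (Y.colLen s.2 : ℤ) - s.1 - 1

/-- `n^{Y⃗}_{α,β}(ε₁,ε₂,a⃗) = ∏_{s∈Y_α}(−l_{Y_β}(s)ε₁ + (a_{Y_α}(s)+1)ε₂ + a_β − a_α)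
  · ∏_{t∈Y_β}((l_{Y_α}(t)+1)ε₁ − a_{Y_β}(t)ε₂ + a_β − a_α)`. -/
def nYab {K : Type*} [CommRing K] {r : ℕ} (Y : Fin r → YoungDiagram) (α β : Fin r)
    (e1 e2 : K) (a : Fin r → K) : K :=
  (∏ s ∈ (Y α).cells,
      ((-(legLen (Y β) s : K)) * e1 + ((armLen (Y α) s : K) + 1) * e2 + a β - a α)) *
    ∏ t ∈ (Y β).cells,
      (((legLen (Y α) t : K) + 1) * e1 - (armLen (Y β) t : K) * e2 + a β - a α)

/-- The `n`-th coefficient `Z_n(ε₁,ε₂,a⃗)` of Nekrasov's partition function: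
the sum over `r`-tuples of Young diagrams of total size `n` of
`1/∏_{α,β} n^{Y⃗}_{α,β}(ε₁,ε₂,a⃗)`. -/
def Zcoeff (K : Type*) [Field K] (r n : ℕ) (e1 e2 : K) (a : Fin r → K) : K :=
  ∑ᶠ Y ∈ {Y : Fin r → YoungDiagram | (∑ α, (Y α).card) = n},
    (∏ α, ∏ β, nYab Y α β e1 e2 a)⁻¹

/-- The field ℚ(ε₁,ε₂,a₁,…,a_r). -/
abbrev K (r : ℕ) : Type := FractionRing (MvPolynomial (Fin (r + 2)) ℚ)

def gen (r : ℕ) (i : Fin (r + 2)) : K r :=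
  algebraMap (MvPolynomial (Fin (r + 2)) ℚ) (K r) (MvPolynomial.X i)

noncomputable section

namespace NekSym

open Finset

abbrev R := AddMonoidAlgebra ℤ (ℤ × ℤ)

def M (v : ℤ × ℤ) : R := AddMonoidAlgebra.single v 1

lemma M_mul (u v : ℤ × ℤ) : M u * M v = M (u + v) := by
  simp [M, AddMonoidAlgebra.single_mul_single]

lemma M_pow (v : ℤ × ℤ) (n : ℕ) : M v ^ n = M (n • v) := by
  simp [M, AddMonoidAlgebra.single_pow]

lemma sum_range_ite {A : Type*} [AddCommMonoid A] (F : ℕ → A) (n m : ℕ) :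
    ∑ j ∈ range m, (if j < n then F j else 0) = ∑ j ∈ range (min n m), F j := by
  rw [← Finset.sum_filter]
  congr 1
  ext j
  simp only [mem_filter, mem_range, lt_min_iff]
  tauto

lemma sum_cells {A : Type*} [AddCommMonoid A] (Y : YoungDiagram) (F : ℕ × ℕ → A) :
    ∑ s ∈ Y.cells, F s
      = ∑ i ∈ range (Y.colLen 0), ∑ j ∈ range (Y.rowLen i), F (i, j) := by
  have hcells : Y.cells =
      (range (Y.colLen 0) ×ˢ range (Y.rowLen 0)).filter (fun s => s ∈ Y.cells) := by
    ext ⟨i, j⟩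
    simp only [YoungDiagram.mem_cells, mem_filter, mem_product, mem_range]
    constructor
    · intro h
      exact ⟨⟨YoungDiagram.mem_iff_lt_colLen.mp (Y.up_left_mem le_rfl (Nat.zero_le _) h),
             YoungDiagram.mem_iff_lt_rowLen.mp (Y.up_left_mem (Nat.zero_le _) le_rfl h)⟩, h⟩
    · exact fun h => h.2
  rw [hcells, Finset.sum_filter, Finset.sum_product]
  refine Finset.sum_congr rfl fun i _ => ?_
  calc ∑ j ∈ range (Y.rowLen 0), (if (i, j) ∈ Y.cells then F (i, j) else 0)
      = ∑ j ∈ range (Y.rowLen 0), (if j < Y.rowLen i then F (i, j) else 0) := by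
        refine Finset.sum_congr rfl fun j _ => ?_
        congr 1
        simp only [YoungDiagram.mem_cells, YoungDiagram.mem_iff_lt_rowLen]
    _ = ∑ j ∈ range (min (Y.rowLen i) (Y.rowLen 0)), F (i, j) := sum_range_ite _ _ _
    _ = ∑ j ∈ range (Y.rowLen i), F (i, j) := by
        rw [min_eq_left (Y.rowLen_anti 0 i (Nat.zero_le i))]

lemma transpose_cells (Y : YoungDiagram) :
    Y.transpose.cells = Y.cells.map ⟨Prod.swap, Prod.swap_injective⟩ := by
  ext ⟨i, j⟩
  simp only [YoungDiagram.mem_cells, YoungDiagram.mem_transpose, Finset.mem_map,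
    Function.Embedding.coeFn_mk, Prod.exists, Prod.swap_prod_mk, Prod.mk.injEq]
  constructor
  · intro h; exact ⟨j, i, h, rfl, rfl⟩
  · rintro ⟨a, b, hab, rfl, rfl⟩
    exact hab

lemma sum_transpose_cells {A : Type*} [AddCommMonoid A] (Y : YoungDiagram) (F : ℕ × ℕ → A) :
    ∑ s ∈ Y.transpose.cells, F s = ∑ s ∈ Y.cells, F s.swap := by
  rw [transpose_cells, Finset.sum_map]
  rfl

lemma prod_transpose_cells {A : Type*} [CommMonoid A] (Y : YoungDiagram) (F : ℕ × ℕ → A) :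
    ∏ s ∈ Y.transpose.cells, F s = ∏ s ∈ Y.cells, F s.swap := by
  rw [transpose_cells, Finset.prod_map]
  rfl

lemma card_transpose (Y : YoungDiagram) : Y.transpose.card = Y.card := by
  simp [YoungDiagram.card, transpose_cells]

end NekSym
namespace NekSym

open Finset

lemma M_congr' (a b c d : ℤ) (h1 : a = c) (h2 : b = d) : M (a, b) = M (c, d) := by
  rw [h1, h2]

lemma M_mul' (a b c d : ℤ) : M (a, b) * M (c, d) = M (a + c, b + d) := by
  rw [M_mul]; rfl

/-- partial geometric-type sums of monomials along the second coordinate -/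
def Ssum (d a : ℤ) (n : ℕ) : R := ∑ l ∈ range n, M (d, a - l)

lemma Ssum_add (d a : ℤ) (m n : ℕ) :
    Ssum d a (m + n) = Ssum d a m + Ssum d (a - m) n := by
  rw [Ssum, Finset.sum_range_add]
  congr 1
  exact Finset.sum_congr rfl fun l _ => M_congr' _ _ _ _ rfl (by push_cast; ring)

lemma reflect_sum (d c : ℤ) (n : ℕ) :
    ∑ j ∈ range n, M (d, (j : ℤ) + c) = Ssum d (((n : ℕ) : ℤ) - 1 + c) n := by
  rw [Ssum, ← Finset.sum_range_reflect]
  refine Finset.sum_congr rfl fun j hj => ?_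
  rw [mem_range] at hj
  exact M_congr' _ _ _ _ rfl (by omega)

lemma key (d : ℤ) (A B : ℕ) :
    ∑ j ∈ range (min A B), (M (d, (A : ℤ) - j) - M (d, (j : ℤ) + 1 - B))
      = Ssum d A B - Ssum d 0 B := by
  rw [Finset.sum_sub_distrib]
  have h2 : ∑ j ∈ range (min A B), M (d, (j : ℤ) + 1 - B)
      = Ssum d (((min A B : ℕ) : ℤ) - B) (min A B) := by
    calc ∑ j ∈ range (min A B), M (d, (j : ℤ) + 1 - B)
        = ∑ j ∈ range (min A B), M (d, (j : ℤ) + (1 - B)) := by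
          exact Finset.sum_congr rfl fun j _ => M_congr' _ _ _ _ rfl (by ring)
      _ = Ssum d (((min A B : ℕ) : ℤ) - 1 + (1 - B)) (min A B) := reflect_sum d (1 - B) (min A B)
      _ = Ssum d (((min A B : ℕ) : ℤ) - B) (min A B) := by congr 1; ring
  rw [h2]
  have h1 : ∑ j ∈ range (min A B), M (d, (A : ℤ) - j) = Ssum d A (min A B) := rfl
  rw [h1]
  rcases le_total A B with h | h
  · rw [min_eq_left h]
    have e1 : Ssum d A B = Ssum d A A + Ssum d 0 (B - A) := by
      conv_lhs => rw [show B = A + (B - A) by omega]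
      rw [Ssum_add]
      congr 2
      ring
    have e2 : Ssum d 0 B = Ssum d 0 (B - A) + Ssum d ((A : ℤ) - B) A := by
      conv_lhs => rw [show B = (B - A) + A by omega]
      rw [Ssum_add]
      congr 2
      omega
    rw [e1, e2]
    abel
  · rw [min_eq_right h, sub_self]

lemma pair_key (d : ℤ) (A B : ℕ) :
    (1 - M (-1, 0)) * (∑ j ∈ range (min A B), M (d + 1, (A : ℤ) - j))
      - (M (1, 0) - 1) * (∑ j ∈ range (min B A), M (d, (j : ℤ) + 1 - B))
      = (1 - M (1, 0)) * (1 - M (0, 1)) * ∑ j ∈ range A, ∑ l ∈ range B, M (d, (j : ℤ) - l) := by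
  have hy : ∀ e : ℤ, M (1, 0) * M (d, e) = M (d + 1, e) := fun e => by
    rw [M_mul']; exact M_congr' _ _ _ _ (by ring) (by ring)
  have hx : ∀ e : ℤ, M (-1, 0) * M (d + 1, e) = M (d, e) := fun e => by
    rw [M_mul']; exact M_congr' _ _ _ _ (by ring) (by ring)
  have hq : ∀ a : ℤ, M (0, 1) * M (d, a) = M (d, a + 1) := fun a => by
    rw [M_mul']; exact M_congr' _ _ _ _ (by ring) (by ring)
  have l1 : (1 - M (-1, 0)) * (∑ j ∈ range (min A B), M (d + 1, (A : ℤ) - j))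
      = (M (1, 0) - 1) * ∑ j ∈ range (min A B), M (d, (A : ℤ) - j) := by
    rw [Finset.mul_sum, Finset.mul_sum]
    refine Finset.sum_congr rfl fun j _ => ?_
    rw [sub_mul, sub_mul, one_mul, hx, hy]
    ring
  rw [l1, min_comm B A, ← mul_sub, ← Finset.sum_sub_distrib, key]
  have r1 : ∀ j : ℕ, (1 - M (0, 1)) * ∑ l ∈ range B, M (d, (j : ℤ) - l)
      = Ssum d j B - Ssum d ((j : ℤ) + 1) B := by
    intro j
    calc (1 - M (0, 1)) * ∑ l ∈ range B, M (d, (j : ℤ) - l)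
        = ∑ l ∈ range B, (M (d, (j : ℤ) - l) - M (d, (j : ℤ) + 1 - l)) := by
          rw [sub_mul, one_mul, Finset.mul_sum, ← Finset.sum_sub_distrib]
          refine Finset.sum_congr rfl fun l _ => ?_
          rw [hq]
          exact congrArg _ (M_congr' _ _ _ _ rfl (by ring))
      _ = Ssum d j B - Ssum d ((j : ℤ) + 1) B := by
          rw [Ssum, Ssum, ← Finset.sum_sub_distrib]
  have r2 : (1 - M (0, 1)) * ∑ j ∈ range A, ∑ l ∈ range B, M (d, (j : ℤ) - l)
      = -(Ssum d A B - Ssum d 0 B) := by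
    have tele : ∑ j ∈ range A, (Ssum d ((j : ℤ) + 1) B - Ssum d j B)
        = Ssum d A B - Ssum d 0 B := by
      have t := Finset.sum_range_sub (fun j : ℕ => Ssum d (j : ℤ) B) A
      simpa using t
    rw [Finset.mul_sum]
    calc ∑ j ∈ range A, (1 - M (0, 1)) * ∑ l ∈ range B, M (d, (j : ℤ) - l)
        = ∑ j ∈ range A, -(Ssum d ((j : ℤ) + 1) B - Ssum d j B) := by
          exact Finset.sum_congr rfl fun j _ => by rw [r1]; ring
      _ = -∑ j ∈ range A, (Ssum d ((j : ℤ) + 1) B - Ssum d j B) := by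
          rw [Finset.sum_neg_distrib]
      _ = -(Ssum d A B - Ssum d 0 B) := by rw [tele]
  calc (M (1, 0) - 1) * (Ssum d A B - Ssum d 0 B)
      = (1 - M (1, 0)) * -(Ssum d A B - Ssum d 0 B) := by ring
    _ = (1 - M (1, 0)) * ((1 - M (0, 1)) * ∑ j ∈ range A, ∑ l ∈ range B, M (d, (j : ℤ) - l)) := by
          rw [r2]
    _ = (1 - M (1, 0)) * (1 - M (0, 1)) * ∑ j ∈ range A, ∑ l ∈ range B, M (d, (j : ℤ) - l) := by
          ring

end NekSym
namespace NekSym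

open Finset

def fv (lam mu : YoungDiagram) (s : ℕ × ℕ) : ℤ × ℤ :=
  ((s.1 : ℤ) + 1 - (mu.colLen s.2 : ℤ), (lam.rowLen s.1 : ℤ) - (s.2 : ℤ))

def gv (lam mu : YoungDiagram) (s : ℕ × ℕ) : ℤ × ℤ :=
  ((lam.colLen s.2 : ℤ) - (s.1 : ℤ), (s.2 : ℤ) + 1 - (mu.rowLen s.1 : ℤ))

def Vl (lam : YoungDiagram) : R := ∑ s ∈ lam.cells, M ((s.1 : ℤ), (s.2 : ℤ))

def Vm (mu : YoungDiagram) : R := ∑ t ∈ mu.cells, M (-(t.1 : ℤ), -(t.2 : ℤ))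

lemma inner_swap (mu : YoungDiagram) (A : ℕ) (H : ℕ → ℕ → R) :
    ∑ j ∈ range A, ∑ k ∈ range (mu.colLen j), H j k
      = ∑ k ∈ range (mu.colLen 0), ∑ j ∈ range (min A (mu.rowLen k)), H j k := by
  have step1 : ∀ j, ∑ k ∈ range (mu.colLen j), H j k
      = ∑ k ∈ range (mu.colLen 0), if k < mu.colLen j then H j k else 0 := by
    intro j
    rw [sum_range_ite, min_eq_left (mu.colLen_anti 0 j (Nat.zero_le j))]
  calc ∑ j ∈ range A, ∑ k ∈ range (mu.colLen j), H j k
      = ∑ j ∈ range A, ∑ k ∈ range (mu.colLen 0), if k < mu.colLen j then H j k else 0 := by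
        exact Finset.sum_congr rfl fun j _ => step1 j
    _ = ∑ k ∈ range (mu.colLen 0), ∑ j ∈ range A, if k < mu.colLen j then H j k else 0 :=
        Finset.sum_comm
    _ = ∑ k ∈ range (mu.colLen 0), ∑ j ∈ range (min A (mu.rowLen k)), H j k := by
        refine Finset.sum_congr rfl fun k _ => ?_
        have hiff : ∀ j, (k < mu.colLen j) = (j < mu.rowLen k) := fun j => by
          rw [← YoungDiagram.mem_iff_lt_colLen, ← YoungDiagram.mem_iff_lt_rowLen]
        calc ∑ j ∈ range A, (if k < mu.colLen j then H j k else 0)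
            = ∑ j ∈ range A, (if j < mu.rowLen k then H j k else 0) := by
              exact Finset.sum_congr rfl fun j _ => by simp only [hiff]
          _ = ∑ j ∈ range (min (mu.rowLen k) A), H j k := sum_range_ite _ _ _
          _ = ∑ j ∈ range (min A (mu.rowLen k)), H j k := by rw [min_comm]

lemma Mshift_left (p b : ℤ) (C : ℕ) :
    M (p - C, b) = M (p, b) - (1 - M (-1, 0)) * ∑ k ∈ range C, M (p - k, b) := by
  have hterm : ∀ k : ℕ, M (p, b) * (M (-1, 0)) ^ k = M (p - k, b) := fun k => by
    rw [M_pow]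
    rw [show (k • ((-1 : ℤ), (0 : ℤ))) = ((-(k : ℤ)), (0 : ℤ)) by
      simp [Prod.ext_iff]]
    rw [M_mul']
    exact M_congr' _ _ _ _ (by ring) (by ring)
  have hgeom : (1 - M (-1, 0)) * ∑ k ∈ range C, M (p - k, b)
      = M (p, b) - M (p - C, b) := by
    have hsum : ∑ k ∈ range C, M (p - k, b) = M (p, b) * ∑ k ∈ range C, (M (-1, 0)) ^ k := by
      rw [Finset.mul_sum]; exact Finset.sum_congr rfl fun k _ => (hterm k).symm
    rw [hsum]
    have g := geom_sum_mul (M (-1, 0)) C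
    calc (1 - M (-1, 0)) * (M (p, b) * ∑ k ∈ range C, (M (-1, 0)) ^ k)
        = M (p, b) * (-((∑ k ∈ range C, (M (-1, 0)) ^ k) * ((M (-1, 0)) - 1))) := by ring
      _ = M (p, b) * (1 - (M (-1, 0)) ^ C) := by rw [g]; ring
      _ = M (p, b) - M (p, b) * (M (-1, 0)) ^ C := by ring
      _ = M (p, b) - M (p - C, b) := by rw [hterm]
  rw [hgeom]; ring

lemma Mshift_right (p b : ℤ) (C : ℕ) :
    M (p + C, b) = M (p, b) + (M (1, 0) - 1) * ∑ k ∈ range C, M (p + k, b) := by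
  have hterm : ∀ k : ℕ, M (p, b) * (M (1, 0)) ^ k = M (p + k, b) := fun k => by
    rw [M_pow]
    rw [show (k • ((1 : ℤ), (0 : ℤ))) = (((k : ℤ)), (0 : ℤ)) by simp [Prod.ext_iff]]
    rw [M_mul']
    exact M_congr' _ _ _ _ (by ring) (by ring)
  have hgeom : (M (1, 0) - 1) * ∑ k ∈ range C, M (p + k, b)
      = M (p + C, b) - M (p, b) := by
    have hsum : ∑ k ∈ range C, M (p + k, b) = M (p, b) * ∑ k ∈ range C, (M (1, 0)) ^ k := by
      rw [Finset.mul_sum]; exact Finset.sum_congr rfl fun k _ => (hterm k).symm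
    rw [hsum]
    have g := geom_sum_mul (M (1, 0)) C
    calc (M (1, 0) - 1) * (M (p, b) * ∑ k ∈ range C, (M (1, 0)) ^ k)
        = M (p, b) * ((∑ k ∈ range C, (M (1, 0)) ^ k) * ((M (1, 0)) - 1)) := by ring
      _ = M (p, b) * ((M (1, 0)) ^ C - 1) := by rw [g]
      _ = M (p, b) * (M (1, 0)) ^ C - M (p, b) := by ring
      _ = M (p + C, b) - M (p, b) := by rw [hterm]
  rw [hgeom]; ring

end NekSym
namespace NekSym

open Finset

lemma hPhi1 (lam mu : YoungDiagram) :
    ∑ s ∈ lam.cells, M (fv lam mu s)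
      = M (1, 1) * Vl lam
        - (1 - M (-1, 0)) * ∑ i ∈ range (lam.colLen 0), ∑ k ∈ range (mu.colLen 0),
            ∑ j ∈ range (min (lam.rowLen i) (mu.rowLen k)),
              M (((i : ℤ) - k) + 1, (lam.rowLen i : ℤ) - j) := by
  rw [sum_cells]
  have pointstep : ∀ i : ℕ, ∑ j ∈ range (lam.rowLen i), M (fv lam mu (i, j))
      = (∑ j ∈ range (lam.rowLen i), M ((i : ℤ) + 1, (lam.rowLen i : ℤ) - j))
        - (1 - M (-1, 0)) * ∑ j ∈ range (lam.rowLen i), ∑ k ∈ range (mu.colLen j),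
            M (((i : ℤ) - k) + 1, (lam.rowLen i : ℤ) - j) := by
    intro i
    rw [Finset.mul_sum, ← Finset.sum_sub_distrib]
    refine Finset.sum_congr rfl fun j _ => ?_
    have hfv : fv lam mu (i, j)
        = (((i : ℤ) + 1) - (mu.colLen j : ℤ), (lam.rowLen i : ℤ) - (j : ℤ)) := rfl
    rw [hfv, Mshift_left]
    congr 2
    exact Finset.sum_congr rfl fun k _ => M_congr' _ _ _ _ (by ring) rfl
  calc ∑ i ∈ range (lam.colLen 0), ∑ j ∈ range (lam.rowLen i), M (fv lam mu (i, j))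
      = ∑ i ∈ range (lam.colLen 0),
          ((∑ j ∈ range (lam.rowLen i), M ((i : ℤ) + 1, (lam.rowLen i : ℤ) - j))
            - (1 - M (-1, 0)) * ∑ j ∈ range (lam.rowLen i), ∑ k ∈ range (mu.colLen j),
                M (((i : ℤ) - k) + 1, (lam.rowLen i : ℤ) - j)) := by
        exact Finset.sum_congr rfl fun i _ => pointstep i
    _ = (∑ i ∈ range (lam.colLen 0), ∑ j ∈ range (lam.rowLen i),
          M ((i : ℤ) + 1, (lam.rowLen i : ℤ) - j))
        - ∑ i ∈ range (lam.colLen 0), (1 - M (-1, 0)) *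
            ∑ j ∈ range (lam.rowLen i), ∑ k ∈ range (mu.colLen j),
              M (((i : ℤ) - k) + 1, (lam.rowLen i : ℤ) - j) := Finset.sum_sub_distrib _ _
    _ = M (1, 1) * Vl lam
        - (1 - M (-1, 0)) * ∑ i ∈ range (lam.colLen 0), ∑ k ∈ range (mu.colLen 0),
            ∑ j ∈ range (min (lam.rowLen i) (mu.rowLen k)),
              M (((i : ℤ) - k) + 1, (lam.rowLen i : ℤ) - j) := by
        congr 1
        · rw [Vl, sum_cells, Finset.mul_sum]
          refine Finset.sum_congr rfl fun i _ => ?_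
          rw [Finset.mul_sum]
          calc ∑ j ∈ range (lam.rowLen i), M ((i : ℤ) + 1, (lam.rowLen i : ℤ) - j)
              = Ssum ((i : ℤ) + 1) ((lam.rowLen i : ℤ) - 1 + 1) (lam.rowLen i) := by
                rw [Ssum]
                exact Finset.sum_congr rfl fun j _ => M_congr' _ _ _ _ rfl (by ring)
            _ = ∑ j ∈ range (lam.rowLen i), M ((i : ℤ) + 1, (j : ℤ) + 1) :=
                (reflect_sum ((i : ℤ) + 1) 1 (lam.rowLen i)).symm
            _ = ∑ j ∈ range (lam.rowLen i), M (1, 1) * M ((i : ℤ), (j : ℤ)) := by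
                refine Finset.sum_congr rfl fun j _ => ?_
                rw [M_mul']
                exact M_congr' _ _ _ _ (by ring) (by ring)
        · rw [Finset.mul_sum]
          refine Finset.sum_congr rfl fun i _ => ?_
          congr 1
          exact inner_swap mu (lam.rowLen i)
            (fun j k => M (((i : ℤ) - k) + 1, (lam.rowLen i : ℤ) - j))

end NekSym
namespace NekSym

open Finset

lemma hPhi2 (lam mu : YoungDiagram) :
    ∑ t ∈ mu.cells, M (gv lam mu t)
      = Vm mu + (M (1, 0) - 1) * ∑ i ∈ range (lam.colLen 0), ∑ k ∈ range (mu.colLen 0),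
          ∑ j ∈ range (min (mu.rowLen k) (lam.rowLen i)),
            M ((i : ℤ) - k, (j : ℤ) + 1 - (mu.rowLen k : ℤ)) := by
  rw [sum_cells]
  have pointstep : ∀ k : ℕ, ∑ j ∈ range (mu.rowLen k), M (gv lam mu (k, j))
      = (∑ j ∈ range (mu.rowLen k), M (-(k : ℤ), (j : ℤ) + 1 - (mu.rowLen k : ℤ)))
        + (M (1, 0) - 1) * ∑ j ∈ range (mu.rowLen k), ∑ i ∈ range (lam.colLen j),
            M ((i : ℤ) - k, (j : ℤ) + 1 - (mu.rowLen k : ℤ)) := by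
    intro k
    rw [Finset.mul_sum, ← Finset.sum_add_distrib]
    refine Finset.sum_congr rfl fun j _ => ?_
    have hgv : M (gv lam mu (k, j))
        = M ((-(k : ℤ)) + (lam.colLen j : ℤ), (j : ℤ) + 1 - (mu.rowLen k : ℤ)) := by
      show M ((lam.colLen j : ℤ) - (k : ℤ), (j : ℤ) + 1 - (mu.rowLen k : ℤ)) = _
      exact M_congr' _ _ _ _ (by ring) rfl
    rw [hgv, Mshift_right]
    congr 2
    exact Finset.sum_congr rfl fun i _ => M_congr' _ _ _ _ (by ring) rfl
  calc ∑ k ∈ range (mu.colLen 0), ∑ j ∈ range (mu.rowLen k), M (gv lam mu (k, j))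
      = ∑ k ∈ range (mu.colLen 0),
          ((∑ j ∈ range (mu.rowLen k), M (-(k : ℤ), (j : ℤ) + 1 - (mu.rowLen k : ℤ)))
            + (M (1, 0) - 1) * ∑ j ∈ range (mu.rowLen k), ∑ i ∈ range (lam.colLen j),
                M ((i : ℤ) - k, (j : ℤ) + 1 - (mu.rowLen k : ℤ))) := by
        exact Finset.sum_congr rfl fun k _ => pointstep k
    _ = (∑ k ∈ range (mu.colLen 0), ∑ j ∈ range (mu.rowLen k),
          M (-(k : ℤ), (j : ℤ) + 1 - (mu.rowLen k : ℤ)))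
        + ∑ k ∈ range (mu.colLen 0), (M (1, 0) - 1) *
            ∑ j ∈ range (mu.rowLen k), ∑ i ∈ range (lam.colLen j),
              M ((i : ℤ) - k, (j : ℤ) + 1 - (mu.rowLen k : ℤ)) := Finset.sum_add_distrib
    _ = Vm mu + (M (1, 0) - 1) * ∑ i ∈ range (lam.colLen 0), ∑ k ∈ range (mu.colLen 0),
          ∑ j ∈ range (min (mu.rowLen k) (lam.rowLen i)),
            M ((i : ℤ) - k, (j : ℤ) + 1 - (mu.rowLen k : ℤ)) := by
        congr 1
        · rw [Vm, sum_cells]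
          refine Finset.sum_congr rfl fun k _ => ?_
          calc ∑ j ∈ range (mu.rowLen k), M (-(k : ℤ), (j : ℤ) + 1 - (mu.rowLen k : ℤ))
              = ∑ j ∈ range (mu.rowLen k), M (-(k : ℤ), (j : ℤ) + (1 - (mu.rowLen k : ℤ))) := by
                exact Finset.sum_congr rfl fun j _ => M_congr' _ _ _ _ rfl (by ring)
            _ = Ssum (-(k : ℤ)) ((mu.rowLen k : ℤ) - 1 + (1 - (mu.rowLen k : ℤ))) (mu.rowLen k) :=
                reflect_sum _ _ _
            _ = Ssum (-(k : ℤ)) 0 (mu.rowLen k) := by congr 1; ring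
            _ = ∑ j ∈ range (mu.rowLen k), M (-(k : ℤ), -(j : ℤ)) := by
                rw [Ssum]
                exact Finset.sum_congr rfl fun j _ => M_congr' _ _ _ _ rfl (by ring)
        · rw [Finset.mul_sum]
          calc ∑ k ∈ range (mu.colLen 0), (M (1, 0) - 1) *
                ∑ j ∈ range (mu.rowLen k), ∑ i ∈ range (lam.colLen j),
                  M ((i : ℤ) - k, (j : ℤ) + 1 - (mu.rowLen k : ℤ))
              = ∑ k ∈ range (mu.colLen 0), (M (1, 0) - 1) *
                  ∑ i ∈ range (lam.colLen 0), ∑ j ∈ range (min (mu.rowLen k) (lam.rowLen i)),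
                    M ((i : ℤ) - k, (j : ℤ) + 1 - (mu.rowLen k : ℤ)) := by
                refine Finset.sum_congr rfl fun k _ => ?_
                congr 1
                exact inner_swap lam (mu.rowLen k)
                  (fun j i => M ((i : ℤ) - k, (j : ℤ) + 1 - (mu.rowLen k : ℤ)))
            _ = ∑ i ∈ range (lam.colLen 0), (M (1, 0) - 1) *
                  ∑ k ∈ range (mu.colLen 0), ∑ j ∈ range (min (mu.rowLen k) (lam.rowLen i)),
                    M ((i : ℤ) - k, (j : ℤ) + 1 - (mu.rowLen k : ℤ)) := by
                simp only [Finset.mul_sum]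
                exact Finset.sum_comm
            _ = ∑ i ∈ range (lam.colLen 0), (M (1, 0) - 1) *
                  ∑ k ∈ range (mu.colLen 0), ∑ j ∈ range (min (mu.rowLen k) (lam.rowLen i)),
                    M ((i : ℤ) - k, (j : ℤ) + 1 - (mu.rowLen k : ℤ)) := rfl

end NekSym
namespace NekSym

open Finset

lemma hVV (lam mu : YoungDiagram) :
    Vl lam * Vm mu
      = ∑ i ∈ range (lam.colLen 0), ∑ k ∈ range (mu.colLen 0),
          ∑ j ∈ range (lam.rowLen i), ∑ l ∈ range (mu.rowLen k),
            M ((i : ℤ) - k, (j : ℤ) - l) := by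
  rw [Vl, Vm, sum_cells lam, sum_cells mu, Finset.sum_mul_sum]
  refine Finset.sum_congr rfl fun i _ => Finset.sum_congr rfl fun k _ => ?_
  rw [Finset.sum_mul_sum]
  refine Finset.sum_congr rfl fun j _ => Finset.sum_congr rfl fun l _ => ?_
  rw [M_mul']
  exact M_congr' _ _ _ _ (by ring) (by ring)

lemma phi_eq (lam mu : YoungDiagram) :
    (∑ s ∈ lam.cells, M (fv lam mu s)) + (∑ t ∈ mu.cells, M (gv lam mu t))
      = M (1, 1) * Vl lam + Vm mu
        - (1 - M (1, 0)) * (1 - M (0, 1)) * (Vl lam * Vm mu) := by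
  rw [hPhi1 lam mu, hPhi2 lam mu]
  have hS : (1 - M (-1, 0)) * (∑ i ∈ range (lam.colLen 0), ∑ k ∈ range (mu.colLen 0),
        ∑ j ∈ range (min (lam.rowLen i) (mu.rowLen k)),
          M (((i : ℤ) - k) + 1, (lam.rowLen i : ℤ) - j))
      - (M (1, 0) - 1) * (∑ i ∈ range (lam.colLen 0), ∑ k ∈ range (mu.colLen 0),
        ∑ j ∈ range (min (mu.rowLen k) (lam.rowLen i)),
          M ((i : ℤ) - k, (j : ℤ) + 1 - (mu.rowLen k : ℤ)))
      = (1 - M (1, 0)) * (1 - M (0, 1)) * (Vl lam * Vm mu) := by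
    rw [hVV]
    calc (1 - M (-1, 0)) * (∑ i ∈ range (lam.colLen 0), ∑ k ∈ range (mu.colLen 0),
          ∑ j ∈ range (min (lam.rowLen i) (mu.rowLen k)),
            M (((i : ℤ) - k) + 1, (lam.rowLen i : ℤ) - j))
        - (M (1, 0) - 1) * (∑ i ∈ range (lam.colLen 0), ∑ k ∈ range (mu.colLen 0),
          ∑ j ∈ range (min (mu.rowLen k) (lam.rowLen i)),
            M ((i : ℤ) - k, (j : ℤ) + 1 - (mu.rowLen k : ℤ)))
        = ∑ i ∈ range (lam.colLen 0), ∑ k ∈ range (mu.colLen 0),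
            ((1 - M (-1, 0)) * (∑ j ∈ range (min (lam.rowLen i) (mu.rowLen k)),
                M (((i : ℤ) - k) + 1, (lam.rowLen i : ℤ) - j))
              - (M (1, 0) - 1) * (∑ j ∈ range (min (mu.rowLen k) (lam.rowLen i)),
                M ((i : ℤ) - k, (j : ℤ) + 1 - (mu.rowLen k : ℤ)))) := by
          simp only [Finset.mul_sum, Finset.sum_sub_distrib]
      _ = ∑ i ∈ range (lam.colLen 0), ∑ k ∈ range (mu.colLen 0),
            (1 - M (1, 0)) * (1 - M (0, 1)) *
              ∑ j ∈ range (lam.rowLen i), ∑ l ∈ range (mu.rowLen k),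
                M ((i : ℤ) - k, (j : ℤ) - l) := by
          refine Finset.sum_congr rfl fun i _ => Finset.sum_congr rfl fun k _ => ?_
          exact pair_key ((i : ℤ) - k) (lam.rowLen i) (mu.rowLen k)
      _ = (1 - M (1, 0)) * (1 - M (0, 1)) *
            ∑ i ∈ range (lam.colLen 0), ∑ k ∈ range (mu.colLen 0),
              ∑ j ∈ range (lam.rowLen i), ∑ l ∈ range (mu.rowLen k),
                M ((i : ℤ) - k, (j : ℤ) - l) := by
          simp only [Finset.mul_sum]
  linear_combination -hS

end NekSym
namespace NekSym

open Finset

def sigma : R ≃ₐ[ℤ] R := AddMonoidAlgebra.domCongr ℤ ℤ (AddEquiv.prodComm : ℤ × ℤ ≃+ ℤ × ℤ)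

lemma sigma_M (v : ℤ × ℤ) : sigma (M v) = M v.swap := by
  simp [sigma, M, AddMonoidAlgebra.domCongr_single]

lemma fv_transpose (lam mu : YoungDiagram) (s : ℕ × ℕ) :
    (fv lam.transpose mu.transpose s.swap).swap = gv lam mu s := by
  cases s with
  | mk i j =>
    simp [fv, gv, YoungDiagram.rowLen_transpose, YoungDiagram.colLen_transpose]

lemma gv_transpose (lam mu : YoungDiagram) (s : ℕ × ℕ) :
    (gv lam.transpose mu.transpose s.swap).swap = fv lam mu s := by
  cases s with
  | mk i j =>
    simp [fv, gv, YoungDiagram.rowLen_transpose, YoungDiagram.colLen_transpose]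

lemma sigma_Vl (lam : YoungDiagram) : sigma (Vl lam.transpose) = Vl lam := by
  rw [Vl, map_sum, sum_transpose_cells]
  rw [Vl]
  refine Finset.sum_congr rfl fun s _ => ?_
  rw [sigma_M]
  rfl

lemma sigma_Vm (mu : YoungDiagram) : sigma (Vm mu.transpose) = Vm mu := by
  rw [Vm, map_sum, sum_transpose_cells]
  rw [Vm]
  refine Finset.sum_congr rfl fun s _ => ?_
  rw [sigma_M]
  rfl

lemma char_sym (lam mu : YoungDiagram) :
    (∑ s ∈ lam.cells, M (gv lam mu s)) + (∑ t ∈ mu.cells, M (fv lam mu t))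
      = (∑ s ∈ lam.cells, M (fv lam mu s)) + (∑ t ∈ mu.cells, M (gv lam mu t)) := by
  have hA : ∑ s ∈ lam.cells, M (gv lam mu s)
      = sigma (∑ s ∈ lam.transpose.cells, M (fv lam.transpose mu.transpose s)) := by
    rw [map_sum, sum_transpose_cells]
    exact (Finset.sum_congr rfl fun s _ => by rw [sigma_M, fv_transpose]).symm
  have hB : ∑ t ∈ mu.cells, M (fv lam mu t)
      = sigma (∑ t ∈ mu.transpose.cells, M (gv lam.transpose mu.transpose t)) := by
    rw [map_sum, sum_transpose_cells]
    exact (Finset.sum_congr rfl fun t _ => by rw [sigma_M, gv_transpose]).symm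
  calc (∑ s ∈ lam.cells, M (gv lam mu s)) + ∑ t ∈ mu.cells, M (fv lam mu t)
      = sigma ((∑ s ∈ lam.transpose.cells, M (fv lam.transpose mu.transpose s))
          + ∑ t ∈ mu.transpose.cells, M (gv lam.transpose mu.transpose t)) := by
        rw [map_add, hA, hB]
    _ = sigma (M (1, 1) * Vl lam.transpose + Vm mu.transpose
          - (1 - M (1, 0)) * (1 - M (0, 1)) * (Vl lam.transpose * Vm mu.transpose)) := by
        rw [phi_eq]
    _ = M (1, 1) * Vl lam + Vm mu
          - (1 - M (0, 1)) * (1 - M (1, 0)) * (Vl lam * Vm mu) := by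
        simp only [map_sub, map_add, map_mul, map_one, sigma_Vl, sigma_Vm, sigma_M,
          Prod.swap_prod_mk]
    _ = M (1, 1) * Vl lam + Vm mu
          - (1 - M (1, 0)) * (1 - M (0, 1)) * (Vl lam * Vm mu) := by ring
    _ = (∑ s ∈ lam.cells, M (fv lam mu s)) + ∑ t ∈ mu.cells, M (gv lam mu t) :=
        (phi_eq lam mu).symm

end NekSym
namespace NekSym

open Finset

lemma msum_count (m : Multiset (ℤ × ℤ)) (x : ℤ × ℤ) :
    ((m.map M).sum : R).coeff x = (m.count x : ℤ) := by
  induction m using Multiset.induction_on with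
  | empty => simp
  | cons a t ih =>
    rw [Multiset.map_cons, Multiset.sum_cons,
      AddMonoidAlgebra.coeff_add, Finsupp.add_apply, ih, Multiset.count_cons]
    have hM : (M a).coeff x = if a = x then (1 : ℤ) else 0 := Finsupp.single_apply
    rw [hM]
    by_cases h : a = x
    · subst h
      rw [if_pos rfl, if_pos rfl]
      push_cast
      ring
    · have h' : ¬ (x = a) := fun hh => h hh.symm
      rw [if_neg h, if_neg h']
      push_cast
      ring

lemma finsum_eq (S : Finset (ℕ × ℕ)) (F : ℕ × ℕ → ℤ × ℤ) :
    ∑ s ∈ S, M (F s) = ((S.val.map F).map M).sum := by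
  rw [Finset.sum_eq_multiset_sum, Multiset.map_map]
  rfl

lemma mset_sym (lam mu : YoungDiagram) :
    lam.cells.val.map (fv lam mu) + mu.cells.val.map (gv lam mu)
      = lam.cells.val.map (gv lam mu) + mu.cells.val.map (fv lam mu) := by
  refine Multiset.ext.mpr fun x => ?_
  have h0 := char_sym lam mu
  rw [finsum_eq, finsum_eq, finsum_eq, finsum_eq] at h0
  have h := congrArg (fun z : R => z.coeff x) h0
  rw [AddMonoidAlgebra.coeff_add, AddMonoidAlgebra.coeff_add, Finsupp.add_apply, Finsupp.add_apply, msum_count, msum_count, msum_count, msum_count] at h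
  rw [Multiset.count_add, Multiset.count_add]
  omega

lemma prod_sym {Kc : Type*} [CommRing Kc] (lam mu : YoungDiagram) (v : ℤ × ℤ → Kc) :
    (∏ s ∈ lam.cells, v (fv lam mu s)) * ∏ t ∈ mu.cells, v (gv lam mu t)
      = (∏ s ∈ lam.cells, v (gv lam mu s)) * ∏ t ∈ mu.cells, v (fv lam mu t) := by
  have h := congrArg (fun m : Multiset (ℤ × ℤ) => (m.map v).prod) (mset_sym lam mu)
  simpa only [Multiset.map_add, Multiset.prod_add, Multiset.map_map,
    Finset.prod_eq_multiset_prod, Function.comp] using h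

end NekSym
namespace NekSym

open Finset

lemma nYab_transpose {Kc : Type*} [CommRing Kc] {r : ℕ} (Y : Fin r → YoungDiagram)
    (α β : Fin r) (e1 e2 : Kc) (a : Fin r → Kc) :
    nYab (fun γ => (Y γ).transpose) α β e2 e1 a = nYab Y α β e1 e2 a := by
  unfold nYab
  set v : ℤ × ℤ → Kc := fun p => (p.1 : Kc) * e1 + (p.2 : Kc) * e2 + (a β - a α) with hv
  have h1 : (∏ s ∈ ((fun γ => (Y γ).transpose) α).cells,
      ((-(legLen ((fun γ => (Y γ).transpose) β) s : Kc)) * e2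
        + ((armLen ((fun γ => (Y γ).transpose) α) s : Kc) + 1) * e1 + a β - a α))
      = ∏ s ∈ (Y α).cells, v (gv (Y α) (Y β) s) := by
    show (∏ s ∈ ((Y α).transpose).cells,
      ((-(legLen ((Y β).transpose) s : Kc)) * e2
        + ((armLen ((Y α).transpose) s : Kc) + 1) * e1 + a β - a α)) = _
    rw [prod_transpose_cells]
    refine Finset.prod_congr rfl fun s _ => ?_
    cases s with
    | mk i j =>
      simp only [hv, armLen, legLen, gv, Prod.swap_prod_mk,
        YoungDiagram.rowLen_transpose, YoungDiagram.colLen_transpose]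
      push_cast
      ring
  have h2 : (∏ t ∈ ((fun γ => (Y γ).transpose) β).cells,
      (((legLen ((fun γ => (Y γ).transpose) α) t : Kc) + 1) * e2
        - (armLen ((fun γ => (Y γ).transpose) β) t : Kc) * e1 + a β - a α))
      = ∏ t ∈ (Y β).cells, v (fv (Y α) (Y β) t) := by
    show (∏ t ∈ ((Y β).transpose).cells,
      (((legLen ((Y α).transpose) t : Kc) + 1) * e2
        - (armLen ((Y β).transpose) t : Kc) * e1 + a β - a α)) = _
    rw [prod_transpose_cells]
    refine Finset.prod_congr rfl fun t _ => ?_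
    cases t with
    | mk i j =>
      simp only [hv, armLen, legLen, fv, Prod.swap_prod_mk,
        YoungDiagram.rowLen_transpose, YoungDiagram.colLen_transpose]
      push_cast
      ring
  have h3 : (∏ s ∈ (Y α).cells,
      ((-(legLen (Y β) s : Kc)) * e1 + ((armLen (Y α) s : Kc) + 1) * e2 + a β - a α))
      = ∏ s ∈ (Y α).cells, v (fv (Y α) (Y β) s) := by
    refine Finset.prod_congr rfl fun s _ => ?_
    cases s with
    | mk i j =>
      simp only [hv, armLen, legLen, fv]
      push_cast
      ring
  have h4 : (∏ t ∈ (Y β).cells,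
      (((legLen (Y α) t : Kc) + 1) * e1 - (armLen (Y β) t : Kc) * e2 + a β - a α))
      = ∏ t ∈ (Y β).cells, v (gv (Y α) (Y β) t) := by
    refine Finset.prod_congr rfl fun t _ => ?_
    cases t with
    | mk i j =>
      simp only [hv, armLen, legLen, gv]
      push_cast
      ring
  rw [h1, h2, h3, h4]
  exact (prod_sym (Y α) (Y β) v).symm

set_option maxHeartbeats 1000000 in
lemma Zcoeff_swap {Kf : Type*} [Field Kf] (r n : ℕ) (e1 e2 : Kf) (a : Fin r → Kf) :
    Zcoeff Kf r n e2 e1 a = Zcoeff Kf r n e1 e2 a := by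
  unfold Zcoeff
  have hinv : ∀ Y : Fin r → YoungDiagram, (fun γ => ((Y γ).transpose).transpose) = Y :=
    fun Y => funext fun γ => (Y γ).transpose_transpose
  set S : Set (Fin r → YoungDiagram) := {Y | (∑ α, (Y α).card) = n} with hS
  set e : (Fin r → YoungDiagram) → (Fin r → YoungDiagram) := fun Y γ => (Y γ).transpose with he
  have hmapsTo : Set.MapsTo e S S := by
    intro Y hY
    simp only [hS, Set.mem_setOf_eq] at *
    rw [← hY]
    exact Finset.sum_congr rfl fun α _ => card_transpose _
  have hbij : S.BijOn e S := by
    refine ⟨hmapsTo, ?_, ?_⟩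
    · intro Y1 _ Y2 _ h12
      have h := congrArg e h12
      have e1' : e (e Y1) = Y1 := hinv Y1
      have e2' : e (e Y2) = Y2 := hinv Y2
      rwa [e1', e2'] at h
    · intro Y hY
      exact ⟨e Y, hmapsTo hY, hinv Y⟩
  refine finsum_mem_eq_of_bijOn e hbij fun Y _ => ?_
  congr 1
  refine Finset.prod_congr rfl fun α _ => Finset.prod_congr rfl fun β _ => ?_
  exact (nYab_transpose Y α β e2 e1 a).symm

end NekSym

/-- `Z(ε₂, ε₁, a⃗; q) = Z(ε₁, ε₂, a⃗; q)` as formal power series in `q`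
over ℚ(ε₁,ε₂,a₁,…,a_r), i.e. coefficientwise. -/
theorem Z_symm_eps (r : ℕ) :
    ∀ n : ℕ,
      Zcoeff (K r) r n (gen r 1) (gen r 0) (fun α => gen r α.succ.succ)
        = Zcoeff (K r) r n (gen r 0) (gen r 1) (fun α => gen r α.succ.succ) := by
  intro n
  exact NekSym.Zcoeff_swap r n (gen r 0) (gen r 1) (fun α => gen r α.succ.succ)
end
end
end

section
/- With Z(ε_1,ε_2,a⃗;q) defined as the sum ∑_{Y⃗} q^{|Y⃗|}/∏_{α,β} n^{Y⃗}_{α,β}(ε_1,ε_2,a⃗) over r-tuples of Young diagrams, one has Z(−ε_1, −ε_2, −a⃗; q) = Z(ε_1, ε_2, a⃗; q). -/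
noncomputable section

lemma nYab_neg {K : Type*} [CommRing K] {r : ℕ} (Y : Fin r → YoungDiagram) (α β : Fin r)
    (e1 e2 : K) (a : Fin r → K) :
    nYab Y α β (-e1) (-e2) (fun i => -(a i))
      = (-1) ^ ((Y α).card + (Y β).card) * nYab Y α β e1 e2 a := by
  unfold nYab
  have h1 : ∏ s ∈ (Y α).cells,
      ((-(legLen (Y β) s : K)) * (-e1) + ((armLen (Y α) s : K) + 1) * (-e2)
        + (fun i => -(a i)) β - (fun i => -(a i)) α)
      = (-1 : K) ^ (Y α).card * ∏ s ∈ (Y α).cells,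
      ((-(legLen (Y β) s : K)) * e1 + ((armLen (Y α) s : K) + 1) * e2 + a β - a α) := by
    rw [← Finset.prod_const, ← Finset.prod_mul_distrib]
    exact Finset.prod_congr rfl (fun s _ => by ring)
  have h2 : ∏ t ∈ (Y β).cells,
      (((legLen (Y α) t : K) + 1) * (-e1) - (armLen (Y β) t : K) * (-e2)
        + (fun i => -(a i)) β - (fun i => -(a i)) α)
      = (-1 : K) ^ (Y β).card * ∏ t ∈ (Y β).cells,
      (((legLen (Y α) t : K) + 1) * e1 - (armLen (Y β) t : K) * e2 + a β - a α) := by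
    rw [← Finset.prod_const, ← Finset.prod_mul_distrib]
    exact Finset.prod_congr rfl (fun t _ => by ring)
  rw [h1, h2, pow_add]
  ring

lemma prod_nYab_neg {K : Type*} [CommRing K] {r : ℕ} (Y : Fin r → YoungDiagram)
    (e1 e2 : K) (a : Fin r → K) :
    (∏ α, ∏ β, nYab Y α β (-e1) (-e2) (fun i => -(a i)))
      = ∏ α, ∏ β, nYab Y α β e1 e2 a := by
  simp only [nYab_neg, Finset.prod_mul_distrib]
  have hsign : (∏ α : Fin r, ∏ β : Fin r, (-1 : K) ^ ((Y α).card + (Y β).card)) = 1 := by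
    rw [Finset.prod_congr rfl (fun α _ => Finset.prod_pow_eq_pow_sum _ _ _),
        Finset.prod_pow_eq_pow_sum]
    have he : (∑ α : Fin r, ∑ β : Fin r, ((Y α).card + (Y β).card))
        = 2 * (r * ∑ α : Fin r, (Y α).card) := by
      simp [Finset.sum_add_distrib, Finset.sum_const, Finset.card_univ, Finset.mul_sum,
        Finset.sum_mul]
      ring_nf
      rw [Finset.sum_mul]
    rw [he, pow_mul]
    norm_num
  rw [hsign, one_mul]

/-- `Z(−ε₁, −ε₂, −a⃗; q) = Z(ε₁, ε₂, a⃗; q)`, coefficientwise in `q`. -/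
theorem Z_symm_neg (r : ℕ) :
    ∀ n : ℕ,
      Zcoeff (K r) r n (-(gen r 0)) (-(gen r 1)) (fun α => -(gen r α.succ.succ))
        = Zcoeff (K r) r n (gen r 0) (gen r 1) (fun α => gen r α.succ.succ) := by
  intro n
  unfold Zcoeff
  exact finsum_mem_congr rfl (fun Y _ => by rw [prod_nYab_neg])
end
end
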